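/- The polynomial X⁸ − 4X⁶ + 8X⁴ − 4X² + 1 is irreducible over ℚ, and every complex number δ with δ² = (2 − √2)(1 + i)/2 is a root of it; consequently, the minimal polynomial over ℚ of such a δ is X⁸ − 4X⁶ + 8X⁴ − 4X² + 1, and δ generates a field extension of ℚ of degree 8. -/

import Mathlib

open Polynomial Complex Real IntermediateField

private lemma irred_X4 : Irreducible (X ^ 4 - C (2 : ℚ)) := by
  have hmZ : (X ^ 4 - C (2 : ℤ)).Monic := monic_X_pow_sub_C _ (by norm_num)
  have hZ : Irreducible (X ^ 4 - C (2 : ℤ)) := by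
    apply irreducible_of_eisenstein_criterion
      (Ideal.span_singleton_prime (by norm_num : (2:ℤ) ≠ 0) |>.mpr Int.prime_two)
    · rw [hmZ.leadingCoeff]
      simp [Ideal.mem_span_singleton]
    · intro n hn
      rw [degree_X_pow_sub_C (by norm_num) (2:ℤ)] at hn
      have hn4 : n < 4 := by exact_mod_cast hn
      interval_cases n <;>
        simp [coeff_X_pow, coeff_C, Ideal.mem_span_singleton]
    · rw [degree_X_pow_sub_C (by norm_num) (2:ℤ)]; norm_num
    · rw [Ideal.span_singleton_pow]
      simp [coeff_X_pow, coeff_C, Ideal.mem_span_singleton]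
    · exact hmZ.isPrimitive
  have := (Polynomial.IsPrimitive.Int.irreducible_iff_irreducible_map_cast
    hmZ.isPrimitive).mp hZ
  rw [show (C (2:ℚ)) = 2 from map_ofNat C 2]
  simpa using this

/-- The subfield of real numbers inside `ℂ`, as an intermediate field of `ℚ`. -/
private noncomputable def realIF : IntermediateField ℚ ℂ :=
  Subfield.toIntermediateField Complex.ofRealHom.fieldRange
    (fun x => ⟨(x : ℝ), by simp⟩)

private lemma mem_realIF_iff {z : ℂ} : z ∈ realIF ↔ z.im = 0 := by
  constructor
  · rintro ⟨x, rfl⟩; simp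
  · intro h; exact ⟨z.re, Complex.ext (by simp) (by simp [h])⟩

theorem minpoly_delta_degree_eight :
    letI p : Polynomial ℚ := X ^ 8 - 4 * X ^ 6 + 8 * X ^ 4 - 4 * X ^ 2 + 1
    Irreducible p ∧
      ∀ δ : ℂ, δ ^ 2 = (2 - (Real.sqrt 2 : ℂ)) * (1 + Complex.I) / 2 →
        Polynomial.aeval δ p = 0 ∧ minpoly ℚ δ = p ∧
          Module.finrank ℚ ℚ⟮δ⟯ = 8 := by
  set p : Polynomial ℚ := X ^ 8 - 4 * X ^ 6 + 8 * X ^ 4 - 4 * X ^ 2 + 1 with hpdef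
  have hpmonic : p.Monic := by rw [hpdef]; monicity!
  have hpdeg : p.natDegree = 8 := by rw [hpdef]; compute_degree!
  have hr : (Real.sqrt 2 : ℂ) ^ 2 = 2 := by
    rw [← Complex.ofReal_pow, Real.sq_sqrt (by norm_num : (0:ℝ) ≤ 2)]
    norm_num
  have hI := Complex.I_sq
  set r : ℂ := (Real.sqrt 2 : ℂ) with hrdef
  -- The main argument, for an arbitrary δ
  have main : ∀ δ : ℂ, δ ^ 2 = (2 - r) * (1 + Complex.I) / 2 →
      Polynomial.aeval δ p = 0 ∧ minpoly ℚ δ = p ∧ Module.finrank ℚ ℚ⟮δ⟯ = 8 := by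
    intro δ hδ
    have hroot : Polynomial.aeval δ p = 0 := by
      rw [hpdef]
      simp only [map_add, map_sub, map_mul, map_pow, aeval_X, map_ofNat, map_one]
      have h : δ ^ 8 - 4 * δ ^ 6 + 8 * δ ^ 4 - 4 * δ ^ 2 + 1
          = (δ^2)^4 - 4 * (δ^2)^3 + 8 * (δ^2)^2 - 4 * (δ^2) + 1 := by ring
      rw [h, hδ]
      linear_combination ((5/8:ℂ) + (3/2:ℂ)*Complex.I + (11/4:ℂ)*Complex.I^2 + (7/2:ℂ)*Complex.I^3 + (13/8:ℂ)*Complex.I^4 + (-1/2:ℂ)*r*Complex.I + (-3/2:ℂ)*r*Complex.I^2 + (-3/2:ℂ)*r*Complex.I^3 + (-1/2:ℂ)*r*Complex.I^4 + (1/16:ℂ)*r^2 + (1/4:ℂ)*r^2*Complex.I + (3/8:ℂ)*r^2*Complex.I^2 + (1/4:ℂ)*r^2*Complex.I^3 + (1/16:ℂ)*r^2*Complex.I^4) * hr + ((13/4:ℂ) + (7:ℂ)*Complex.I + (17/4:ℂ)*Complex.I^2 + (-2:ℂ)*r + (-5:ℂ)*r*Complex.I + (-3:ℂ)*r*Complex.I^2)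 * hI
    have hp0 : p ≠ 0 := hpmonic.ne_zero
    have hint : IsIntegral ℚ δ := ⟨p, hpmonic, by rwa [← Polynomial.aeval_def]⟩
    have hdvd : minpoly ℚ δ ∣ p := minpoly.dvd ℚ δ hroot
    haveI : FiniteDimensional ℚ ℚ⟮δ⟯ := IntermediateField.adjoin.finiteDimensional hint
    have hfr : Module.finrank ℚ ℚ⟮δ⟯ = (minpoly ℚ δ).natDegree :=
      IntermediateField.adjoin.finrank hint
    have hle8 : (minpoly ℚ δ).natDegree ≤ 8 := hpdeg ▸ natDegree_le_of_dvd hdvd hp0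
    -- the element y with y² = √2
    set y : ℂ := (δ^7 - 5*δ^5 + 10*δ^3 - 8*δ)/3 with hydef
    have hy2 : y ^ 2 = r := by
      have h : y ^ 2 = (δ^2) * ((δ^2)^3 - 5*(δ^2)^2 + 10*(δ^2) - 8)^2 / 9 := by
        rw [hydef]; ring
      rw [h, hδ]
      linear_combination ((5/144:ℂ) + (53/144:ℂ)*Complex.I + (-25/144:ℂ)*Complex.I^2 + (31/144:ℂ)*Complex.I^3 + (73/48:ℂ)*Complex.I^4 + (19/16:ℂ)*Complex.I^5 + (217/144:ℂ)*Complex.I^6 + (161/144:ℂ)*Complex.I^7 + (-17/288:ℂ)*r + (53/288:ℂ)*r*Complex.I + (11/96:ℂ)*r*Complex.I^2 + (-67/96:ℂ)*r*Complex.I^3 + (-199/288:ℂ)*r*Complex.I^4 + (-71/96:ℂ)*r*Complex.I^5 + (-361/288:ℂ)*r*Complex.I^6 + (-61/96:ℂ)*r*Complex.I^7 + (-5/96:ℂ)*r^2 + (1/288:ℂ)*r^2*Complex.I + (25/96:ℂ)*r^2*Complex.I^2 + (67/288:ℂ)*r^2*Complex.I^3 + (7/32:ℂ)*r^2*Complex.I^4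 + (23/32:ℂ)*r^2*Complex.I^5 + (229/288:ℂ)*r^2*Complex.I^6 + (77/288:ℂ)*r^2*Complex.I^7 + (-13/576:ℂ)*r^3 + (-31/576:ℂ)*r^3*Complex.I + (-1/192:ℂ)*r^3*Complex.I^2 + (-5/576:ℂ)*r^3*Complex.I^3 + (-155/576:ℂ)*r^3*Complex.I^4 + (-91/192:ℂ)*r^3*Complex.I^5 + (-181/576:ℂ)*r^3*Complex.I^6 + (-43/576:ℂ)*r^3*Complex.I^7 + (-1/192:ℂ)*r^4 + (-11/576:ℂ)*r^4*Complex.I + (-1/192:ℂ)*r^4*Complex.I^2 + (5/64:ℂ)*r^4*Complex.I^3 + (95/576:ℂ)*r^4*Complex.I^4 + (29/192:ℂ)*r^4*Complex.I^5 + (13/192:ℂ)*r^4*Complex.I^6 + (7/576:ℂ)*r^4*Complex.I^7 + (-1/1152:ℂ)*r^5 + (-7/1152:ℂ)*r^5*Complex.I + (-7/384:ℂ)*r^5*Complex.I^2 + (-35/1152:ℂ)*r^5*Complex.I^3 + (-35/1152:ℂ)*r^5*Complex.I^4 + (-7/384:ℂ)*r^5*Complex.I^5 + (-7/1152:ℂ)*r^5*Complex.I^6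 + (-1/1152:ℂ)*r^5*Complex.I^7) * hr + ((37/72:ℂ) + (-11/72:ℂ)*Complex.I + (-11/36:ℂ)*Complex.I^2 + (25/36:ℂ)*Complex.I^3 + (193/72:ℂ)*Complex.I^4 + (169/72:ℂ)*Complex.I^5 + (-97/144:ℂ)*r + (37/144:ℂ)*r*Complex.I + (13/72:ℂ)*r*Complex.I^2 + (-35/72:ℂ)*r*Complex.I^3 + (-91/48:ℂ)*r*Complex.I^4 + (-239/144:ℂ)*r*Complex.I^5) * hI
    have hy4 : y ^ 4 = 2 := by
      rw [show y^4 = (y^2)^2 by ring, hy2, hr]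
    -- I is in ℚ⟮δ⟯
    have hIeq : Complex.I = ((2*δ^6 - 7*δ^4 + 11*δ^2 - 1)/3)^2 := by
      have h : ((2*δ^6 - 7*δ^4 + 11*δ^2 - 1)/3)^2
          = ((2*(δ^2)^3 - 7*(δ^2)^2 + 11*(δ^2) - 1)/3)^2 := by ring
      rw [h, hδ]
      symm
      linear_combination ((13/72:ℂ) + (31/18:ℂ)*Complex.I + (205/36:ℂ)*Complex.I^2 + (22/3:ℂ)*Complex.I^3 + (439/72:ℂ)*Complex.I^4 + (49/9:ℂ)*Complex.I^5 + (91/36:ℂ)*Complex.I^6 + (-1/6:ℂ)*r + (-4/3:ℂ)*r*Complex.I + (-11/4:ℂ)*r*Complex.I^2 + (-115/36:ℂ)*r*Complex.I^3 + (-47/12:ℂ)*r*Complex.I^4 + (-43/12:ℂ)*r*Complex.I^5 + (-23/18:ℂ)*r*Complex.I^6 + (5/48:ℂ)*r^2 + (11/36:ℂ)*r^2*Complex.I + (11/18:ℂ)*r^2*Complex.I^2 + (53/36:ℂ)*r^2*Complex.I^3 + (323/144:ℂ)*r^2*Complex.I^4 + (29/18:ℂ)*r^2*Complex.I^5 + (31/72:ℂ)*r^2*Complex.I^6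 + (1/72:ℂ)*r^3 + (-1/72:ℂ)*r^3*Complex.I + (-5/18:ℂ)*r^3*Complex.I^2 + (-25/36:ℂ)*r^3*Complex.I^3 + (-55/72:ℂ)*r^3*Complex.I^4 + (-29/72:ℂ)*r^3*Complex.I^5 + (-1/12:ℂ)*r^3*Complex.I^6 + (1/144:ℂ)*r^4 + (1/24:ℂ)*r^4*Complex.I + (5/48:ℂ)*r^4*Complex.I^2 + (5/36:ℂ)*r^4*Complex.I^3 + (5/48:ℂ)*r^4*Complex.I^4 + (1/24:ℂ)*r^4*Complex.I^5 + (1/144:ℂ)*r^4*Complex.I^6) * hr + ((113/36:ℂ) + (52/9:ℂ)*Complex.I + (293/36:ℂ)*Complex.I^2 + (94/9:ℂ)*Complex.I^3 + (11/2:ℂ)*Complex.I^4 + (-2:ℂ)*r + (-38/9:ℂ)*r*Complex.I + (-103/18:ℂ)*r*Complex.I^2 + (-133/18:ℂ)*r*Complex.I^3 + (-35/9:ℂ)*r*Complex.I^4) * hI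
    have hδK : δ ∈ ℚ⟮δ⟯ := IntermediateField.mem_adjoin_simple_self ℚ δ
    have h3K : (3:ℂ) ∈ ℚ⟮δ⟯ := by
      have := _root_.natCast_mem (ℚ⟮δ⟯) 3
      simpa using this
    have hyK : y ∈ ℚ⟮δ⟯ := by
      rw [hydef]
      refine div_mem ?_ h3K
      have h5 : (5:ℂ) ∈ ℚ⟮δ⟯ := by simpa using _root_.natCast_mem (ℚ⟮δ⟯) 5
      have h10 : (10:ℂ) ∈ ℚ⟮δ⟯ := by simpa using _root_.natCast_mem (ℚ⟮δ⟯) 10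
      have h8 : (8:ℂ) ∈ ℚ⟮δ⟯ := by simpa using _root_.natCast_mem (ℚ⟮δ⟯) 8
      exact sub_mem (add_mem (sub_mem (pow_mem hδK 7) (mul_mem h5 (pow_mem hδK 5)))
        (mul_mem h10 (pow_mem hδK 3))) (mul_mem h8 hδK)
    have hIK : Complex.I ∈ ℚ⟮δ⟯ := by
      rw [hIeq]
      refine pow_mem (div_mem ?_ h3K) 2
      have h2 : (2:ℂ) ∈ ℚ⟮δ⟯ := by simpa using _root_.natCast_mem (ℚ⟮δ⟯) 2
      have h7 : (7:ℂ) ∈ ℚ⟮δ⟯ := by simpa using _root_.natCast_mem (ℚ⟮δ⟯) 7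
      have h11 : (11:ℂ) ∈ ℚ⟮δ⟯ := by simpa using _root_.natCast_mem (ℚ⟮δ⟯) 11
      exact sub_mem (add_mem (sub_mem (mul_mem h2 (pow_mem hδK 6))
        (mul_mem h7 (pow_mem hδK 4))) (mul_mem h11 (pow_mem hδK 2))) (one_mem _)
    -- y is real
    have hyim : y.im = 0 := by
      by_contra him
      have h1 : (y*y).im = 0 := by rw [← sq, hy2, hrdef]; simp
      have h2 : (y*y).re = Real.sqrt 2 := by rw [← sq, hy2, hrdef]; simp
      rw [Complex.mul_im] at h1
      rw [Complex.mul_re] at h2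
      have hre : y.re = 0 := by
        have h3 : y.re * y.im = 0 := by linarith
        rcases mul_eq_zero.mp h3 with h | h
        · exact h
        · exact absurd h him
      have hpos : 0 < Real.sqrt 2 := Real.sqrt_pos.mpr (by norm_num)
      nlinarith [sq_nonneg y.im]
    -- minpoly of y is X^4 - 2
    have hyint : IsIntegral ℚ y := ⟨X ^ 4 - C 2, monic_X_pow_sub_C _ (by norm_num), by
      simp [← Polynomial.aeval_def, hy4]⟩
    have hmy : minpoly ℚ y = X ^ 4 - C 2 :=
      (minpoly.eq_of_irreducible_of_monic irred_X4
        (by simp only [map_sub, map_pow, aeval_X, aeval_C]; rw [hy4]; norm_num)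
        (monic_X_pow_sub_C _ (by norm_num))).symm
    haveI : FiniteDimensional ℚ ℚ⟮y⟯ := IntermediateField.adjoin.finiteDimensional hyint
    have hfy : Module.finrank ℚ ℚ⟮y⟯ = 4 := by
      rw [IntermediateField.adjoin.finrank hyint, hmy, natDegree_X_pow_sub_C]
    have hyle : ℚ⟮y⟯ ≤ ℚ⟮δ⟯ := by
      rw [IntermediateField.adjoin_le_iff]
      intro z hz
      simp only [Set.mem_singleton_iff] at hz
      subst hz
      exact hyK
    -- I is not in ℚ⟮y⟯
    have hInotin : Complex.I ∉ ℚ⟮y⟯ := by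
      intro hmem
      have hsub : ℚ⟮y⟯ ≤ realIF := by
        rw [IntermediateField.adjoin_le_iff]
        intro z hz
        simp only [Set.mem_singleton_iff] at hz
        subst hz
        exact mem_realIF_iff.mpr hyim
      have : Complex.I.im = 0 := mem_realIF_iff.mp (hsub hmem)
      simp at this
    -- 4 divides the degree
    have hdvd4 : Module.finrank ℚ ℚ⟮y⟯ ∣ Module.finrank ℚ ℚ⟮δ⟯ := by
      have h := IntermediateField.relfinrank_mul_relfinrank
        (bot_le : ⊥ ≤ ℚ⟮y⟯) hyle
      rw [IntermediateField.relfinrank_bot_left, IntermediateField.relfinrank_bot_left] at h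
      exact ⟨_, h.symm⟩
    rw [hfy] at hdvd4
    -- conclude finrank = 8
    have hn8 : Module.finrank ℚ ℚ⟮δ⟯ = 8 := by
      have hle : Module.finrank ℚ ℚ⟮δ⟯ ≤ 8 := by rw [hfr]; exact hle8
      have hpos : 0 < Module.finrank ℚ ℚ⟮δ⟯ := Module.finrank_pos
      rcases hdvd4 with ⟨c, hc⟩
      have hc12 : c = 1 ∨ c = 2 := by omega
      rcases hc12 with rfl | rfl
      · -- finrank = 4 : contradiction
        exfalso
        have heq : ℚ⟮y⟯ = ℚ⟮δ⟯ := IntermediateField.eq_of_le_of_finrank_eq hyle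
          (by omega)
        exact hInotin (heq ▸ hIK)
      · omega
    have hmpeq : minpoly ℚ δ = p := by
      have hdeg : (minpoly ℚ δ).natDegree = 8 := by rw [← hfr, hn8]
      rcases hdvd with ⟨c, hc⟩
      have hc0 : c ≠ 0 := by rintro rfl; rw [mul_zero] at hc; exact hp0 hc
      have hm0 : minpoly ℚ δ ≠ 0 := minpoly.ne_zero hint
      have hcd : c.natDegree = 0 := by
        have := natDegree_mul hm0 hc0
        rw [← hc, hpdeg, hdeg] at this
        omega
      have hcmonic : c.leadingCoeff = 1 := by
        have := leadingCoeff_mul (minpoly ℚ δ) c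
        rw [← hc, hpmonic.leadingCoeff, (minpoly.monic hint).leadingCoeff, one_mul] at this
        exact this.symm
      have hc1 : c = 1 := by
        have h0 : c.coeff 0 = 1 := by
          rwa [Polynomial.leadingCoeff, hcd] at hcmonic
        rw [Polynomial.eq_C_of_natDegree_eq_zero hcd, h0, map_one]
      rw [hc, hc1, mul_one]
    exact ⟨hroot, hmpeq, hn8⟩
  constructor
  · -- irreducibility, using a specific square root δ₀
    obtain ⟨δ₀, hδ₀⟩ := IsAlgClosed.exists_pow_nat_eq ((2 - r) * (1 + Complex.I) / 2)
      (n := 2) (by norm_num)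
    obtain ⟨_, hmp, _⟩ := main δ₀ hδ₀
    rw [← hmp]
    exact minpoly.irreducible ⟨p, hpmonic, by
      rw [← Polynomial.aeval_def]
      exact (main δ₀ hδ₀).1⟩
  · exact main
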